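/- Let X ~ Bin(n,p). Then for all 0 ≤ t ≤ p, P(X ≤ nt) ≤ exp(-n(√p - √t)²), and for all p ≤ t ≤ 1, P(X ≥ nt) ≤ exp(-2n(√t - √p)²). -/

import Mathlib

open Finset Real

/-- Probability that a `Bin(n,p)` random variable takes value `k`. -/
noncomputable def binomPMF (n : ℕ) (p : ℝ) (k : ℕ) : ℝ :=
  (n.choose k : ℝ) * p ^ k * (1 - p) ^ (n - k)

lemma binomPMF_nonneg {n : ℕ} {p : ℝ} (hp0 : 0 ≤ p) (hp1 : p ≤ 1) (k : ℕ) :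
    0 ≤ binomPMF n p k := by
  unfold binomPMF
  have : (0:ℝ) ≤ 1 - p := by linarith
  positivity

lemma sum_binomPMF (n : ℕ) (p : ℝ) :
    ∑ k ∈ Finset.range (n + 1), binomPMF n p k = 1 := by
  have h : ∑ k ∈ Finset.range (n + 1), binomPMF n p k = (p + (1 - p)) ^ n := by
    rw [add_pow]
    refine Finset.sum_congr rfl fun k _ => ?_
    unfold binomPMF
    ring
  rw [h]
  norm_num

lemma sum_if_binomPMF_le_one {n : ℕ} {p : ℝ} (hp0 : 0 ≤ p) (hp1 : p ≤ 1)
    (cond : ℕ → Prop) [DecidablePred cond] :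
    ∑ k ∈ Finset.range (n + 1), (if cond k then binomPMF n p k else 0) ≤ 1 := by
  rw [← sum_binomPMF n p]
  refine Finset.sum_le_sum fun k _ => ?_
  split_ifs
  · exact le_rfl
  · exact binomPMF_nonneg hp0 hp1 k

lemma chernoff_upper (n : ℕ) (p t s : ℝ) (hp0 : 0 ≤ p) (hp1 : p ≤ 1) (hs : 0 ≤ s) :
    ∑ k ∈ Finset.range (n + 1), (if (n : ℝ) * t ≤ k then binomPMF n p k else 0) ≤
      Real.exp (-(s * ((n : ℝ) * t))) * (p * Real.exp s + (1 - p)) ^ n := by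
  have step1 : ∑ k ∈ Finset.range (n + 1), (if (n : ℝ) * t ≤ k then binomPMF n p k else 0) ≤
      ∑ k ∈ Finset.range (n + 1),
        Real.exp (-(s * ((n : ℝ) * t))) * (binomPMF n p k * Real.exp s ^ k) := by
    refine Finset.sum_le_sum fun k _ => ?_
    have hpk := binomPMF_nonneg (n := n) hp0 hp1 k
    split_ifs with h
    · have h1 : (1 : ℝ) ≤ Real.exp (s * ((k : ℝ) - (n : ℝ) * t)) := by
        rw [← Real.exp_zero]
        exact Real.exp_le_exp.mpr (by nlinarith)
      have h2 : Real.exp (-(s * ((n : ℝ) * t))) * Real.exp s ^ k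
          = Real.exp (s * ((k : ℝ) - (n : ℝ) * t)) := by
        rw [← Real.exp_nat_mul, ← Real.exp_add]; ring_nf
      calc binomPMF n p k = binomPMF n p k * 1 := (mul_one _).symm
        _ ≤ binomPMF n p k * Real.exp (s * ((k : ℝ) - (n : ℝ) * t)) :=
            mul_le_mul_of_nonneg_left h1 hpk
        _ = Real.exp (-(s * ((n : ℝ) * t))) * (binomPMF n p k * Real.exp s ^ k) := by
            rw [← h2]; ring
    · positivity
  refine step1.trans_eq ?_
  rw [← Finset.mul_sum]
  congr 1
  rw [add_pow]
  refine Finset.sum_congr rfl fun k hk => ?_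
  unfold binomPMF
  rw [mul_pow]
  ring

lemma chernoff_lower (n : ℕ) (p t s : ℝ) (hp0 : 0 ≤ p) (hp1 : p ≤ 1) (hs : 0 ≤ s) :
    ∑ k ∈ Finset.range (n + 1), (if (k : ℝ) ≤ (n : ℝ) * t then binomPMF n p k else 0) ≤
      Real.exp (s * ((n : ℝ) * t)) * (p * Real.exp (-s) + (1 - p)) ^ n := by
  have step1 : ∑ k ∈ Finset.range (n + 1), (if (k : ℝ) ≤ (n : ℝ) * t then binomPMF n p k else 0) ≤
      ∑ k ∈ Finset.range (n + 1),
        Real.exp (s * ((n : ℝ) * t)) * (binomPMF n p k * Real.exp (-s) ^ k) := by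
    refine Finset.sum_le_sum fun k _ => ?_
    have hpk := binomPMF_nonneg (n := n) hp0 hp1 k
    split_ifs with h
    · have h1 : (1 : ℝ) ≤ Real.exp (s * ((n : ℝ) * t - (k : ℝ))) := by
        rw [← Real.exp_zero]
        exact Real.exp_le_exp.mpr (by nlinarith)
      have h2 : Real.exp (s * ((n : ℝ) * t)) * Real.exp (-s) ^ k
          = Real.exp (s * ((n : ℝ) * t - (k : ℝ))) := by
        rw [← Real.exp_nat_mul, ← Real.exp_add]; ring_nf
      calc binomPMF n p k = binomPMF n p k * 1 := (mul_one _).symm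
        _ ≤ binomPMF n p k * Real.exp (s * ((n : ℝ) * t - (k : ℝ))) :=
            mul_le_mul_of_nonneg_left h1 hpk
        _ = Real.exp (s * ((n : ℝ) * t)) * (binomPMF n p k * Real.exp (-s) ^ k) := by
            rw [← h2]; ring
    · have : (0:ℝ) ≤ Real.exp (-s) ^ k := by positivity
      positivity
  refine step1.trans_eq ?_
  rw [← Finset.mul_sum]
  congr 1
  rw [add_pow]
  refine Finset.sum_congr rfl fun k hk => ?_
  unfold binomPMF
  rw [mul_pow]
  ring

noncomputable def klD (p t : ℝ) : ℝ :=
  t * Real.log (t / p) + (1 - t) * Real.log ((1 - t) / (1 - p))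

lemma bound_eq_upper (n : ℕ) (p t : ℝ) (hp0 : 0 < p) (hp1 : p < 1) (ht0 : 0 < t) (ht1 : t < 1) :
    Real.exp (-(Real.log (t * (1 - p) / (p * (1 - t))) * ((n : ℝ) * t))) *
      (p * Real.exp (Real.log (t * (1 - p) / (p * (1 - t)))) + (1 - p)) ^ n =
    Real.exp (-((n : ℝ) * klD p t)) := by
  have hq : (0:ℝ) < 1 - p := by linarith
  have hu : (0:ℝ) < 1 - t := by linarith
  have hx : (0:ℝ) < t * (1 - p) / (p * (1 - t)) := by positivity
  rw [Real.exp_log hx]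
  have h2 : p * (t * (1 - p) / (p * (1 - t))) + (1 - p) = (1 - p) / (1 - t) := by
    field_simp; ring
  rw [h2]
  have h3 : ((1 - p) / (1 - t)) ^ n = Real.exp ((n : ℝ) * Real.log ((1 - p) / (1 - t))) := by
    rw [Real.exp_nat_mul, Real.exp_log (by positivity)]
  rw [h3, ← Real.exp_add]
  congr 1
  have e1 : Real.log (t * (1 - p) / (p * (1 - t)))
      = Real.log t + Real.log (1 - p) - (Real.log p + Real.log (1 - t)) := by
    rw [Real.log_div (by positivity) (by positivity), Real.log_mul ht0.ne' hq.ne',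
      Real.log_mul hp0.ne' hu.ne']
  have e2 : Real.log ((1 - p) / (1 - t)) = Real.log (1 - p) - Real.log (1 - t) :=
    Real.log_div hq.ne' hu.ne'
  have e3 : Real.log (t / p) = Real.log t - Real.log p := Real.log_div ht0.ne' hp0.ne'
  have e4 : Real.log ((1 - t) / (1 - p)) = Real.log (1 - t) - Real.log (1 - p) :=
    Real.log_div hu.ne' hq.ne'
  unfold klD
  rw [e1, e2, e3, e4]
  ring

lemma bound_eq_lower (n : ℕ) (p t : ℝ) (hp0 : 0 < p) (hp1 : p < 1) (ht0 : 0 < t) (ht1 : t < 1) :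
    Real.exp (Real.log (p * (1 - t) / (t * (1 - p))) * ((n : ℝ) * t)) *
      (p * Real.exp (-Real.log (p * (1 - t) / (t * (1 - p)))) + (1 - p)) ^ n =
    Real.exp (-((n : ℝ) * klD p t)) := by
  have hq : (0:ℝ) < 1 - p := by linarith
  have hu : (0:ℝ) < 1 - t := by linarith
  have hx : (0:ℝ) < p * (1 - t) / (t * (1 - p)) := by positivity
  rw [← Real.log_inv, Real.exp_log (by positivity)]
  have h2 : p * (p * (1 - t) / (t * (1 - p)))⁻¹ + (1 - p) = (1 - p) / (1 - t) := by
    field_simp; ring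
  rw [h2]
  have h3 : ((1 - p) / (1 - t)) ^ n = Real.exp ((n : ℝ) * Real.log ((1 - p) / (1 - t))) := by
    rw [Real.exp_nat_mul, Real.exp_log (by positivity)]
  rw [h3, ← Real.exp_add]
  congr 1
  have e1 : Real.log (p * (1 - t) / (t * (1 - p)))
      = Real.log p + Real.log (1 - t) - (Real.log t + Real.log (1 - p)) := by
    rw [Real.log_div (by positivity) (by positivity), Real.log_mul hp0.ne' hu.ne',
      Real.log_mul ht0.ne' hq.ne']
  have e2 : Real.log ((1 - p) / (1 - t)) = Real.log (1 - p) - Real.log (1 - t) :=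
    Real.log_div hq.ne' hu.ne'
  have e3 : Real.log (t / p) = Real.log t - Real.log p := Real.log_div ht0.ne' hp0.ne'
  have e4 : Real.log ((1 - t) / (1 - p)) = Real.log (1 - t) - Real.log (1 - p) :=
    Real.log_div hu.ne' hq.ne'
  unfold klD
  rw [e1, e2, e3, e4]
  ring

lemma sqrt_helper {t p : ℝ} (ht0 : 0 < t) :
    t * Real.sqrt (p / t) = Real.sqrt (t * p) := by
  have hst : Real.sqrt t ≠ 0 := by positivity
  rw [Real.sqrt_div' p ht0.le, Real.sqrt_mul ht0.le]
  field_simp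
  nlinarith [Real.sq_sqrt ht0.le, Real.sqrt_nonneg p]

lemma kl_ge_sq_lower (p t : ℝ) (hp0 : 0 < p) (hp1 : p < 1) (ht0 : 0 < t) (ht1 : t < 1) :
    (Real.sqrt p - Real.sqrt t) ^ 2 ≤ klD p t := by
  have hq : (0:ℝ) < 1 - p := by linarith
  have hu : (0:ℝ) < 1 - t := by linarith
  set a := Real.sqrt (p / t) with ha
  set b := Real.sqrt ((1 - p) / (1 - t)) with hb
  have ha0 : 0 < a := Real.sqrt_pos.mpr (by positivity)
  have hb0 : 0 < b := Real.sqrt_pos.mpr (by positivity)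
  have hconc := (strictConcaveOn_log_Ioi.concaveOn).2 (Set.mem_Ioi.mpr ha0)
    (Set.mem_Ioi.mpr hb0) ht0.le hu.le (by ring)
  simp only [smul_eq_mul] at hconc
  have hta : t * a = Real.sqrt (t * p) := sqrt_helper ht0
  have htb : (1 - t) * b = Real.sqrt ((1 - t) * (1 - p)) := sqrt_helper hu
  set S := Real.sqrt (t * p) + Real.sqrt ((1 - t) * (1 - p)) with hS
  have hS0 : 0 < S := by positivity
  have hlog : Real.log (t * a + (1 - t) * b) ≤ S - 1 := by
    rw [hta, htb]; exact Real.log_le_sub_one_of_pos hS0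
  have hla : Real.log a = (Real.log p - Real.log t) / 2 := by
    rw [ha, Real.log_sqrt (by positivity), Real.log_div hp0.ne' ht0.ne']
  have hlb : Real.log b = (Real.log (1 - p) - Real.log (1 - t)) / 2 := by
    rw [hb, Real.log_sqrt (by positivity), Real.log_div hq.ne' hu.ne']
  have key : 2 - 2 * S ≤ klD p t := by
    have := hconc.trans hlog
    rw [hla, hlb] at this
    unfold klD
    rw [Real.log_div ht0.ne' hp0.ne', Real.log_div hu.ne' hq.ne']
    linarith
  have hAM : 2 * Real.sqrt ((1 - t) * (1 - p)) ≤ (1 - t) + (1 - p) := by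
    rw [Real.sqrt_mul hu.le]
    nlinarith [sq_nonneg (Real.sqrt (1 - t) - Real.sqrt (1 - p)),
      Real.sq_sqrt hu.le, Real.sq_sqrt hq.le]
  have hsp : Real.sqrt (t * p) = Real.sqrt t * Real.sqrt p := Real.sqrt_mul ht0.le p
  refine le_trans ?_ key
  rw [hS, hsp]
  nlinarith [Real.sq_sqrt ht0.le, Real.sq_sqrt hp0.le]

noncomputable def gFun (p x : ℝ) : ℝ :=
  x * (Real.log x - Real.log p) + (1 - x) * (Real.log (1 - x) - Real.log (1 - p))
    - 2 * (Real.sqrt x - Real.sqrt p) ^ 2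

lemma gFun_hasDerivAt (p x : ℝ) (hx0 : 0 < x) (hx1 : x < 1) :
    HasDerivAt (gFun p)
      ((Real.log x - Real.log p) - (Real.log (1 - x) - Real.log (1 - p))
        - (2 - 2 * Real.sqrt p / Real.sqrt x)) x := by
  have hu : (0:ℝ) < 1 - x := by linarith
  have hsx : (0:ℝ) < Real.sqrt x := Real.sqrt_pos.mpr hx0
  have h1 : HasDerivAt (fun x => x * (Real.log x - Real.log p))
      (1 * (Real.log x - Real.log p) + x * x⁻¹) x :=
    (hasDerivAt_id x).mul ((Real.hasDerivAt_log hx0.ne').sub_const (Real.log p))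
  have h2a : HasDerivAt (fun x : ℝ => 1 - x) (-1) x := by
    simpa using (hasDerivAt_id x).const_sub 1
  have h2b : HasDerivAt (fun x : ℝ => Real.log (1 - x) - Real.log (1 - p))
      ((-1) / (1 - x)) x := (h2a.log hu.ne').sub_const _
  have h2 : HasDerivAt (fun x : ℝ => (1 - x) * (Real.log (1 - x) - Real.log (1 - p)))
      ((-1) * (Real.log (1 - x) - Real.log (1 - p)) + (1 - x) * ((-1) / (1 - x))) x :=
    h2a.mul h2b
  have h3a : HasDerivAt (fun x : ℝ => (Real.sqrt x - Real.sqrt p) ^ 2)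
      (2 * (Real.sqrt x - Real.sqrt p) ^ 1 * (1 / (2 * Real.sqrt x))) x :=
    ((Real.hasDerivAt_sqrt hx0.ne').sub_const (Real.sqrt p)).pow 2
  have h3 : HasDerivAt (fun x : ℝ => 2 * (Real.sqrt x - Real.sqrt p) ^ 2)
      (2 * (2 * (Real.sqrt x - Real.sqrt p) ^ 1 * (1 / (2 * Real.sqrt x)))) x :=
    h3a.const_mul 2
  have := (h1.add h2).sub h3
  refine this.congr_deriv ?_
  field_simp
  ring

lemma kl_ge_two_sq_upper (p t : ℝ) (hp0 : 0 < p) (hpt : p ≤ t) (ht1 : t < 1) :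
    2 * (Real.sqrt t - Real.sqrt p) ^ 2 ≤ klD p t := by
  have hp1 : p < 1 := lt_of_le_of_lt hpt ht1
  have hq : (0:ℝ) < 1 - p := by linarith
  have hsub : Set.Icc p t ⊆ Set.Ioo 0 1 := fun x hx =>
    ⟨lt_of_lt_of_le hp0 hx.1, lt_of_le_of_lt hx.2 ht1⟩
  have hmono : MonotoneOn (gFun p) (Set.Icc p t) := by
    apply monotoneOn_of_deriv_nonneg (convex_Icc p t)
    · intro x hx
      obtain ⟨hx0, hx1⟩ := hsub hx
      exact (gFun_hasDerivAt p x hx0 hx1).continuousAt.continuousWithinAt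
    · intro x hx
      rw [interior_Icc] at hx
      obtain ⟨hx0, hx1⟩ := hsub (Set.mem_Icc_of_Ioo hx)
      exact (gFun_hasDerivAt p x hx0 hx1).differentiableAt.differentiableWithinAt
    · intro x hx
      rw [interior_Icc] at hx
      obtain ⟨hx0, hx1⟩ := hsub (Set.mem_Icc_of_Ioo hx)
      rw [(gFun_hasDerivAt p x hx0 hx1).deriv]
      have hsx : (0:ℝ) < Real.sqrt x := Real.sqrt_pos.mpr hx0
      have hsp : (0:ℝ) < Real.sqrt p := Real.sqrt_pos.mpr hp0
      have hux : (0:ℝ) < 1 - x := by linarith [hx1]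
      have hL : Real.log (Real.sqrt p / Real.sqrt x) ≤ Real.sqrt p / Real.sqrt x - 1 :=
        Real.log_le_sub_one_of_pos (by positivity)
      have hE : Real.log (Real.sqrt p / Real.sqrt x)
          = (Real.log p - Real.log x) / 2 := by
        rw [Real.log_div hsp.ne' hsx.ne', Real.log_sqrt hp0.le, Real.log_sqrt hx0.le]
        ring
      have h1 : 2 - 2 * Real.sqrt p / Real.sqrt x ≤ Real.log x - Real.log p := by
        rw [hE] at hL
        have h2d : 2 * (Real.sqrt p / Real.sqrt x) = 2 * Real.sqrt p / Real.sqrt x := by ring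
        linarith [hL]
      have h2 : Real.log (1 - x) ≤ Real.log (1 - p) :=
        Real.log_le_log (by linarith) (by linarith [hx.1])
      linarith
  have hgp : gFun p p = 0 := by
    unfold gFun; ring
  have hle := hmono (Set.left_mem_Icc.mpr hpt) (Set.right_mem_Icc.mpr hpt) hpt
  rw [hgp] at hle
  have hExp : klD p t = gFun p t + 2 * (Real.sqrt t - Real.sqrt p) ^ 2 := by
    have ht0 : 0 < t := lt_of_lt_of_le hp0 hpt
    have hut : (0:ℝ) < 1 - t := by linarith
    unfold klD gFun
    rw [Real.log_div ht0.ne' hp0.ne', Real.log_div hut.ne' hq.ne']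
    ring
  linarith [hle]

theorem binomial_tail_bounds (n : ℕ) (p : ℝ) (hp0 : 0 ≤ p) (hp1 : p ≤ 1) (t : ℝ) :
    (0 ≤ t → t ≤ p →
      ∑ k ∈ Finset.range (n + 1), (if (k : ℝ) ≤ n * t then binomPMF n p k else 0) ≤
        Real.exp (-(n : ℝ) * (Real.sqrt p - Real.sqrt t) ^ 2)) ∧
    (p ≤ t → t ≤ 1 →
      ∑ k ∈ Finset.range (n + 1), (if (n : ℝ) * t ≤ k then binomPMF n p k else 0) ≤
        Real.exp (-2 * (n : ℝ) * (Real.sqrt t - Real.sqrt p) ^ 2)) := by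
  constructor
  · -- lower tail
    intro ht0 htp
    rcases eq_or_lt_of_le htp with h | htp'
    · -- t = p : trivial bound by 1
      subst h
      have : Real.exp (-(n : ℝ) * (Real.sqrt t - Real.sqrt t) ^ 2) = 1 := by
        simp
      rw [this]
      exact sum_if_binomPMF_le_one hp0 hp1 _
    · have hp0' : 0 < p := lt_of_le_of_lt ht0 htp'
      rcases eq_or_lt_of_le ht0 with h0 | ht0'
      · -- t = 0
        subst h0
        have hsum : ∑ k ∈ Finset.range (n + 1),
            (if (k : ℝ) ≤ (n : ℝ) * (0:ℝ) then binomPMF n p k else 0) = binomPMF n p 0 := by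
          rw [Finset.sum_eq_single_of_mem 0 (Finset.mem_range.mpr (Nat.succ_pos n))]
          · norm_num
          · intro k _ hk
            have : ¬ ((k : ℝ) ≤ (n : ℝ) * 0) := by
              push_neg
              have : 0 < k := Nat.pos_of_ne_zero hk
              simp only [mul_zero]
              exact_mod_cast this
            rw [if_neg this]
        rw [hsum]
        have h1 : binomPMF n p 0 = (1 - p) ^ n := by simp [binomPMF]
        have h2 : Real.sqrt 0 = 0 := Real.sqrt_zero
        rw [h1, h2]
        have h3 : (1 - p) ≤ Real.exp (-p) := by
          linarith [Real.add_one_le_exp (-p)]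
        have h4 : (1 - p) ^ n ≤ Real.exp (-p) ^ n :=
          pow_le_pow_left₀ (by linarith) h3 n
        refine h4.trans_eq ?_
        rw [← Real.exp_nat_mul]
        congr 1
        rw [sub_zero, Real.sq_sqrt hp0]
        ring
      · rcases eq_or_lt_of_le hp1 with hpe | hp1'
        · -- p = 1, 0 < t < p = 1
          have ht1' : t < 1 := by rw [hpe] at htp'; exact htp'
          rcases Nat.eq_zero_or_pos n with rfl | hn0
          · simp only [Nat.cast_zero, zero_mul, Finset.range_one, Finset.sum_singleton]
            norm_num [binomPMF]
          · have hsum : ∑ k ∈ Finset.range (n + 1),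
                (if (k : ℝ) ≤ (n : ℝ) * t then binomPMF n p k else 0) = 0 := by
              refine Finset.sum_eq_zero fun k hk => ?_
              rcases eq_or_ne k n with rfl | hkn
              · have : ¬ ((k : ℝ) ≤ (k : ℝ) * t) := by
                  push_neg
                  have hk0 : (0:ℝ) < k := by exact_mod_cast hn0
                  nlinarith
                rw [if_neg this]
              · have hklt : k < n :=
                  lt_of_le_of_ne (Nat.lt_succ_iff.mp (Finset.mem_range.mp hk)) hkn
                have hz : binomPMF n p k = 0 := by
                  have hnk : n - k ≠ 0 := Nat.sub_ne_zero_of_lt hklt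
                  simp [binomPMF, hpe, zero_pow hnk]
                rw [hz]
                simp
            rw [hsum]
            positivity
        · -- 0 < t < p < 1 : general case
          set s := Real.log (p * (1 - t) / (t * (1 - p))) with hs
          have hq : (0:ℝ) < 1 - p := by linarith
          have hu : (0:ℝ) < 1 - t := by linarith
          have hs0 : 0 ≤ s := by
            apply Real.log_nonneg
            rw [le_div_iff₀ (by positivity)]
            nlinarith
          have hC := chernoff_lower n p t s hp0 hp1 hs0
          rw [bound_eq_lower n p t hp0' hp1' ht0' (lt_trans htp' hp1')] at hC
          refine hC.trans ?_
          rw [Real.exp_le_exp]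
          have hkl := kl_ge_sq_lower p t hp0' hp1' ht0' (lt_trans htp' hp1')
          have hn0 : (0:ℝ) ≤ n := Nat.cast_nonneg n
          nlinarith
  · -- upper tail
    intro hpt ht1
    rcases eq_or_lt_of_le hpt with h | hpt'
    · subst h
      have : Real.exp (-2 * (n : ℝ) * (Real.sqrt p - Real.sqrt p) ^ 2) = 1 := by simp
      rw [this]
      exact sum_if_binomPMF_le_one hp0 hp1 _
    · have ht0' : 0 < t := lt_of_le_of_lt hp0 hpt'
      rcases eq_or_lt_of_le hp0 with hpe | hp0'
      · -- p = 0, t > 0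
        rcases Nat.eq_zero_or_pos n with rfl | hn0
        · simp only [Nat.cast_zero, zero_mul, Finset.range_one, Finset.sum_singleton]
          norm_num [binomPMF]
        · have hsum : ∑ k ∈ Finset.range (n + 1),
              (if (n : ℝ) * t ≤ (k:ℝ) then binomPMF n p k else 0) = 0 := by
            refine Finset.sum_eq_zero fun k hk => ?_
            rcases eq_or_ne k 0 with rfl | hk0
            · have : ¬ ((n:ℝ) * t ≤ ((0:ℕ):ℝ)) := by
                push_neg
                have : (0:ℝ) < n := by exact_mod_cast hn0
                push_cast
                nlinarith
              rw [if_neg this]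
            · have : binomPMF n p k = 0 := by
                rw [← hpe]
                simp [binomPMF, zero_pow hk0]
              rw [this]; simp
          rw [hsum]
          positivity
      · rcases eq_or_lt_of_le ht1 with hte | ht1'
        · -- t = 1, 0 < p ≤ 1... here p < t = 1
          subst hte
          have hsum : ∑ k ∈ Finset.range (n + 1),
              (if (n : ℝ) * 1 ≤ (k:ℝ) then binomPMF n p k else 0) = binomPMF n p n := by
            rw [Finset.sum_eq_single_of_mem n (self_mem_range_succ n)]
            · norm_num
            · intro k hk hkn
              have hklt : k < n := lt_of_le_of_ne (Nat.lt_succ_iff.mp (Finset.mem_range.mp hk)) hkn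
              have : ¬ ((n:ℝ) * 1 ≤ (k:ℝ)) := by
                push_neg
                rw [mul_one]
                exact_mod_cast hklt
              rw [if_neg this]
          rw [hsum]
          have h1 : binomPMF n p n = p ^ n := by simp [binomPMF]
          rw [h1, Real.sqrt_one]
          have hlsp : Real.log (Real.sqrt p) ≤ Real.sqrt p - 1 :=
            Real.log_le_sub_one_of_pos (Real.sqrt_pos.mpr hp0')
          have hsp1 : Real.sqrt p ≤ 1 := by
            rw [show (1:ℝ) = Real.sqrt 1 from (Real.sqrt_one).symm]
            exact Real.sqrt_le_sqrt (by linarith)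
          have hlp : Real.log p ≤ -2 * (1 - Real.sqrt p) ^ 2 := by
            have : Real.log p = 2 * Real.log (Real.sqrt p) := by
              rw [Real.log_sqrt hp0]; ring
            nlinarith [hlsp, hsp1, Real.sqrt_nonneg p]
          calc p ^ n = Real.exp ((n:ℝ) * Real.log p) := by
                rw [Real.exp_nat_mul, Real.exp_log hp0']
            _ ≤ Real.exp (-2 * (n : ℝ) * (1 - Real.sqrt p) ^ 2) := by
                rw [Real.exp_le_exp]
                have hn0 : (0:ℝ) ≤ n := Nat.cast_nonneg n
                nlinarith
        · -- 0 < p < t < 1 : general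
          set s := Real.log (t * (1 - p) / (p * (1 - t))) with hs
          have hq : (0:ℝ) < 1 - p := by linarith [lt_trans hpt' ht1']
          have hu : (0:ℝ) < 1 - t := by linarith
          have hs0 : 0 ≤ s := by
            apply Real.log_nonneg
            rw [le_div_iff₀ (by positivity)]
            nlinarith
          have hC := chernoff_upper n p t s hp0 hp1 hs0
          rw [bound_eq_upper n p t hp0' (lt_trans hpt' ht1') ht0' ht1'] at hC
          refine hC.trans ?_
          rw [Real.exp_le_exp]
          have hkl := kl_ge_two_sq_upper p t hp0' hpt'.le ht1'
          have hn0 : (0:ℝ) ≤ n := Nat.cast_nonneg n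
          nlinarith
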